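/- Let F have generalized Gamma density with parameters α, μ, ĥ > 0 (with μ a positive integer), and let M be independent with density (ζ/S₀^ζ) x^{ζ-1} on [0, S₀], where 0 < ζ < α μ. Then the complementary CDF of Z = F·M satisfies P(Z > z) = Σ_{k=0}^{μ-1} (ζ/(α S₀^ζ)) · (μ^{ζ/α}/k!) · (z^ζ/ĥ^ζ) · Γ((αk - ζ)/α, μ z^α / (S₀^α ĥ^α)) for z > 0. -/

import Mathlib

open MeasureTheory ProbabilityTheory Real Set

/-- The upper incomplete Gamma function `Γ(s, z) = ∫_z^∞ t^(s-1) e^(-t) dt`. -/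
noncomputable def upperGamma (s z : ℝ) : ℝ :=
  ∫ t in Set.Ioi z, t ^ (s - 1) * Real.exp (-t)

/-- The generalized Gamma density with parameters `α, μ, hh > 0`. -/
noncomputable def genGammaPDF (α μ h : ℝ) (x : ℝ) : ℝ :=
  α * μ ^ μ * x ^ (α * μ - 1) / (h ^ (α * μ) * Real.Gamma μ) *
    Real.exp (-μ * x ^ α / h ^ α)

open Filter

section helpers

lemma integrableOn_rpow_mul_exp_neg (s : ℝ) {w : ℝ} (hw : 0 < w) :
    IntegrableOn (fun t : ℝ => t ^ s * Real.exp (-t)) (Set.Ioi w) := by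
  apply integrable_of_isBigO_exp_neg (b := 1/2) (by norm_num)
  · exact (continuousOn_id.rpow_const (fun t ht => Or.inl (ne_of_gt (lt_of_lt_of_le hw ht)))).mul
      (Real.continuous_exp.comp continuous_neg).continuousOn
  · have h := tendsto_rpow_mul_exp_neg_mul_atTop_nhds_zero s (1/2) (by norm_num)
    refine Asymptotics.IsLittleO.isBigO ?_
    refine (Asymptotics.isLittleO_iff_tendsto (fun x hx => absurd hx (Real.exp_ne_zero _))).mpr ?_
    have heq : (fun x:ℝ => x ^ s * Real.exp (-x) / Real.exp (-(1/2)*x))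
        = fun x => x ^ s * Real.exp (-(1/2)*x) := by
      funext x
      rw [mul_div_assoc, ← Real.exp_sub]
      congr 1
      ring
    rw [heq]; exact h

lemma upperGamma_nonneg {s w : ℝ} (hw : 0 < w) : 0 ≤ upperGamma s w := by
  apply setIntegral_nonneg measurableSet_Ioi
  intro t ht
  exact mul_nonneg (Real.rpow_nonneg (le_of_lt (hw.trans ht)) _) (Real.exp_pos _).le

lemma upperGamma_succ (s : ℝ) {w : ℝ} (hw : 0 < w) :
    upperGamma (s + 1) w = w ^ s * Real.exp (-w) + s * upperGamma s w := by
  have key : ∫ t in Set.Ioi w, (t ^ s * Real.exp (-t) - s * (t ^ (s-1) * Real.exp (-t)))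
      = 0 - (-(w ^ s * Real.exp (-w))) := by
    apply integral_Ioi_of_hasDerivAt_of_tendsto' (f := fun t => -(t ^ s * Real.exp (-t)))
    · intro x hx
      have hx0 : (0:ℝ) < x := lt_of_lt_of_le hw hx
      have h1 : HasDerivAt (fun t : ℝ => t ^ s) (s * x ^ (s-1)) x :=
        Real.hasDerivAt_rpow_const (Or.inl hx0.ne')
      have h2 : HasDerivAt (fun t : ℝ => Real.exp (-t)) (Real.exp (-x) * (-1)) x :=
        (Real.hasDerivAt_exp (-x)).comp x ((hasDerivAt_id x).neg)
      have := (h1.mul h2).neg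
      convert this using 1
      · rfl
      ring
    · exact (integrableOn_rpow_mul_exp_neg s hw).sub
        ((integrableOn_rpow_mul_exp_neg (s-1) hw).const_mul s)
    · have h := (tendsto_rpow_mul_exp_neg_mul_atTop_nhds_zero s 1 one_pos).neg
      rw [neg_zero] at h
      refine h.congr' ?_
      filter_upwards [eventually_gt_atTop 0] with x _
      simp [neg_mul, one_mul]
  have hint1 := integrableOn_rpow_mul_exp_neg s hw
  have hint2 := (integrableOn_rpow_mul_exp_neg (s-1) hw).const_mul s
  rw [integral_sub hint1 hint2, integral_const_mul] at key
  have h3 : upperGamma (s+1) w = ∫ t in Set.Ioi w, t ^ s * Real.exp (-t) := by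
    unfold upperGamma; norm_num
  rw [h3]
  unfold upperGamma
  linarith [key]

lemma upperGamma_nat (n : ℕ) (hn : 1 ≤ n) {w : ℝ} (hw : 0 < w) :
    upperGamma n w = (Nat.factorial (n-1)) *
      (Real.exp (-w) * ∑ k ∈ Finset.range n, w ^ k / (Nat.factorial k)) := by
  induction n, hn using Nat.le_induction with
  | base =>
      have h1 : upperGamma ((1:ℕ):ℝ) w = ∫ t in Set.Ioi w, Real.exp (-t) := by
        unfold upperGamma; norm_num
      rw [h1, integral_exp_neg_Ioi]
      simp
  | succ n hn ih =>
      have hcast : ((n + 1 : ℕ) : ℝ) = (n : ℝ) + 1 := by push_cast; ring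
      rw [hcast, upperGamma_succ _ hw, ih, Finset.sum_range_succ]
      have hfac : ((Nat.factorial n) : ℝ) = ((n:ℝ)) * (Nat.factorial (n-1)) := by
        rw_mod_cast [Nat.mul_factorial_pred (by omega)]
      have hw' : w ^ ((n:ℝ)) = w ^ n := Real.rpow_natCast w n
      rw [hw']
      simp only [Nat.add_sub_cancel]
      rw [hfac]
      have h0 : ((n:ℝ)) ≠ 0 := by positivity
      have h1 : ((Nat.factorial (n-1)):ℝ) ≠ 0 := by positivity
      field_simp
      ring

variable {C β : ℝ}

lemma hasDerivWithinAt_CRpow {s : Set ℝ} (hs : ∀ x ∈ s, 0 < x) :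
    ∀ x ∈ s, HasDerivWithinAt (fun x : ℝ => C * x ^ β) (C * (β * x ^ (β - 1))) s x :=
  fun x hx => ((Real.hasDerivAt_rpow_const (Or.inl (hs x hx).ne')).const_mul C).hasDerivWithinAt

lemma injOn_CRpow (hC : 0 < C) (hβ : β ≠ 0) {s : Set ℝ} (hs : ∀ x ∈ s, 0 < x) :
    Set.InjOn (fun x : ℝ => C * x ^ β) s := by
  intro x hx y hy h
  have h' : x ^ β = y ^ β := by
    field_simp at h; simpa [hC.ne'] using h
  have := congrArg (fun v => v ^ β⁻¹) h'
  simpa [Real.rpow_rpow_inv (hs x hx).le hβ, Real.rpow_rpow_inv (hs y hy).le hβ] using this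

lemma image_CRpow_Ioi (hC : 0 < C) (hβ : 0 < β) {t : ℝ} (ht : 0 < t) :
    (fun x : ℝ => C * x ^ β) '' Set.Ioi t = Set.Ioi (C * t ^ β) := by
  ext u
  constructor
  · rintro ⟨x, hx, rfl⟩
    exact mul_lt_mul_of_pos_left (Real.rpow_lt_rpow ht.le hx hβ) hC
  · intro hu
    have hu' : C * t ^ β < u := mem_Ioi.mp hu
    have hu0 : 0 < u := lt_trans (by positivity) hu'
    refine ⟨(u / C) ^ β⁻¹, ?_, ?_⟩
    · have h1 : t ^ β < u / C := (lt_div_iff₀' hC).mpr hu'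
      have := Real.rpow_lt_rpow (by positivity) h1 (by positivity : (0:ℝ) < β⁻¹)
      rwa [Real.rpow_rpow_inv ht.le hβ.ne'] at this
    · show C * ((u / C) ^ β⁻¹) ^ β = u
      rw [Real.rpow_inv_rpow (by positivity) hβ.ne']
      field_simp

lemma image_CRpowNeg_Ioo (hC : 0 < C) (hβ : 0 < β) {S : ℝ} (hS : 0 < S) :
    (fun x : ℝ => C * x ^ (-β)) '' Set.Ioo 0 S = Set.Ioi (C * S ^ (-β)) := by
  have hSb : (0:ℝ) < S ^ β := Real.rpow_pos_of_pos hS β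
  ext u
  constructor
  · rintro ⟨x, hx, rfl⟩
    have h1 : S ^ (-β) < x ^ (-β) := by
      rw [Real.rpow_neg hx.1.le, Real.rpow_neg hS.le]
      exact inv_strictAnti₀ (Real.rpow_pos_of_pos hx.1 β) (Real.rpow_lt_rpow hx.1.le hx.2 hβ)
    exact mul_lt_mul_of_pos_left h1 hC
  · intro hu
    have hu' : C * S ^ (-β) < u := mem_Ioi.mp hu
    have hu0 : 0 < u := lt_trans (by positivity) hu'
    rw [Real.rpow_neg hS.le, ← div_eq_mul_inv, div_lt_iff₀ hSb] at hu'
    have h1 : C / u < S ^ β := by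
      rw [div_lt_iff₀ hu0]; linarith [mul_comm u (S ^ β)]
    refine ⟨(C / u) ^ β⁻¹, ⟨by positivity, ?_⟩, ?_⟩
    · have := Real.rpow_lt_rpow (by positivity) h1 (by positivity : (0:ℝ) < β⁻¹)
      rwa [Real.rpow_rpow_inv hS.le hβ.ne'] at this
    · show C * ((C / u) ^ β⁻¹) ^ (-β) = u
      rw [Real.rpow_neg (by positivity), Real.rpow_inv_rpow (by positivity) hβ.ne']
      field_simp

lemma measurable_rpow_const' (c : ℝ) : Measurable fun x : ℝ => x ^ c := by
  have hrw : (fun x : ℝ => x ^ c) = fun x =>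
      if x = 0 then (if c = 0 then 1 else 0)
      else if 0 < x then Real.exp (Real.log x * c)
      else Real.exp (Real.log x * c) * Real.cos (c * Real.pi) := by
    funext x
    rcases lt_trichotomy x 0 with h|h|h
    · rw [if_neg h.ne, if_neg (lt_asymm h), Real.rpow_def_of_neg h]
    · subst h
      by_cases hc : c = 0
      · subst hc; simp [Real.rpow_zero]
      · simp [Real.zero_rpow hc, hc]
    · rw [if_neg h.ne', if_pos h, Real.rpow_def_of_pos h]
  rw [hrw]
  have h1 : MeasurableSet {x : ℝ | x = 0} := by
    simpa using (measurableSet_singleton (0:ℝ))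
  have h2 : MeasurableSet {x : ℝ | 0 < x} := measurableSet_lt measurable_const measurable_id
  refine Measurable.ite h1 measurable_const (Measurable.ite h2
    ((Real.measurable_log.mul_const c).exp)
    (((Real.measurable_log.mul_const c).exp).mul_const _))

lemma gpdf_eq (α hh : ℝ) (μ : ℕ) (hμ : 1 ≤ μ) (hα : 0 < α) (hhh : 0 < hh)
    {x : ℝ} (hx : 0 < x) :
    |(μ:ℝ)/hh^α * (α * x ^ (α - 1))| •
      (((μ:ℝ)/hh^α * x ^ α) ^ ((μ:ℝ) - 1) * Real.exp (-((μ:ℝ)/hh^α * x ^ α)) /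
        Real.Gamma (μ:ℝ))
      = genGammaPDF α (μ:ℝ) hh x := by
  have hμ0 : (0:ℝ) < (μ:ℝ) := by exact_mod_cast hμ
  have hC : (0:ℝ) < (μ:ℝ)/hh^α := by positivity
  have hΓ : (0:ℝ) < Real.Gamma (μ:ℝ) := Real.Gamma_pos_of_pos hμ0
  rw [smul_eq_mul, abs_of_pos (by positivity)]
  have eC : ((μ:ℝ)/hh^α) * (((μ:ℝ)/hh^α) ^ ((μ:ℝ) - 1)) = (μ:ℝ)^((μ:ℝ)) / hh^(α*(μ:ℝ)) := by
    nth_rewrite 1 [← Real.rpow_one ((μ:ℝ)/hh^α)]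
    rw [← Real.rpow_add hC]
    have h2 : (1:ℝ) + ((μ:ℝ) - 1) = (μ:ℝ) := by ring
    rw [h2, Real.div_rpow hμ0.le (by positivity), ← Real.rpow_mul hhh.le]
  have em : (((μ:ℝ)/hh^α) * x ^ α) ^ ((μ:ℝ) - 1)
      = ((μ:ℝ)/hh^α) ^ ((μ:ℝ) - 1) * x ^ (α * ((μ:ℝ) - 1)) := by
    rw [Real.mul_rpow hC.le (Real.rpow_nonneg hx.le _), ← Real.rpow_mul hx.le]
  have ex : x ^ (α - 1) * x ^ (α * ((μ:ℝ) - 1)) = x ^ (α * (μ:ℝ) - 1) := by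
    rw [← Real.rpow_add hx]; congr 1; ring
  have ee : -((μ:ℝ)/hh^α * x ^ α) = -(μ:ℝ) * x ^ α / hh^α := by ring
  rw [em, ee]
  calc ((μ:ℝ)/hh^α * (α * x ^ (α - 1))) *
      (((μ:ℝ)/hh^α) ^ ((μ:ℝ) - 1) * x ^ (α * ((μ:ℝ) - 1)) * Real.exp (-(μ:ℝ) * x ^ α / hh^α) /
        Real.Gamma (μ:ℝ))
      = α * (((μ:ℝ)/hh^α) * (((μ:ℝ)/hh^α) ^ ((μ:ℝ) - 1))) *
        (x ^ (α - 1) * x ^ (α * ((μ:ℝ) - 1))) * Real.exp (-(μ:ℝ) * x ^ α / hh^α) /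
        Real.Gamma (μ:ℝ) := by ring
    _ = α * ((μ:ℝ)^((μ:ℝ)) / hh^(α*(μ:ℝ))) * x ^ (α * (μ:ℝ) - 1) *
        Real.exp (-(μ:ℝ) * x ^ α / hh^α) / Real.Gamma (μ:ℝ) := by rw [eC, ex]
    _ = genGammaPDF α (μ:ℝ) hh x := by rw [genGammaPDF]; ring

lemma gpdf_nonneg (α hh : ℝ) (μ : ℕ) (hμ : 1 ≤ μ) (hα : 0 < α) (hhh : 0 < hh)
    {x : ℝ} (hx : 0 < x) : 0 ≤ genGammaPDF α (μ:ℝ) hh x := by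
  rw [← gpdf_eq α hh μ hμ hα hhh hx, smul_eq_mul]
  have hμ0 : (0:ℝ) < (μ:ℝ) := by exact_mod_cast hμ
  have hC : (0:ℝ) ≤ (μ:ℝ)/hh^α * x ^ α := by positivity
  have hΓ : (0:ℝ) < Real.Gamma (μ:ℝ) := Real.Gamma_pos_of_pos hμ0
  exact mul_nonneg (abs_nonneg _) (div_nonneg (mul_nonneg
    (Real.rpow_nonneg hC _) (Real.exp_pos _).le) hΓ.le)

/-- Tail of the generalized Gamma distribution. -/
lemma F_tail (α hh : ℝ) (μ : ℕ) (hμ : 1 ≤ μ) (hα : 0 < α) (hhh : 0 < hh)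
    {t : ℝ} (ht : 0 < t) :
    IntegrableOn (genGammaPDF α (μ:ℝ) hh) (Set.Ioi t) ∧
    ∫ x in Set.Ioi t, genGammaPDF α (μ:ℝ) hh x
      = Real.exp (-((μ:ℝ)/hh^α * t ^ α)) *
        ∑ k ∈ Finset.range μ, ((μ:ℝ)/hh^α * t ^ α) ^ k / (Nat.factorial k) := by
  have hμ0 : (0:ℝ) < (μ:ℝ) := by exact_mod_cast hμ
  have hC : (0:ℝ) < (μ:ℝ)/hh^α := by positivity
  have hΓ : (0:ℝ) < Real.Gamma (μ:ℝ) := Real.Gamma_pos_of_pos hμ0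
  set W : ℝ := (μ:ℝ)/hh^α * t ^ α with hW
  have hWpos : 0 < W := by positivity
  have hs : ∀ x ∈ Set.Ioi t, (0:ℝ) < x := fun x hx => lt_trans ht hx
  have hderiv := hasDerivWithinAt_CRpow (C := (μ:ℝ)/hh^α) (β := α) hs
  have hinj := injOn_CRpow hC hα.ne' hs
  have himg := image_CRpow_Ioi hC hα ht
  set g : ℝ → ℝ := fun u => u ^ ((μ:ℝ) - 1) * Real.exp (-u) / Real.Gamma (μ:ℝ) with hg
  have hgint : IntegrableOn g (Set.Ioi W) := by
    exact (integrableOn_rpow_mul_exp_neg ((μ:ℝ) - 1) hWpos).div_const _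
  have hEq : Set.EqOn (fun x => |(μ:ℝ)/hh^α * (α * x ^ (α - 1))| • g ((μ:ℝ)/hh^α * x ^ α))
      (genGammaPDF α (μ:ℝ) hh) (Set.Ioi t) :=
    fun x hx => gpdf_eq α hh μ hμ hα hhh (hs x hx)
  constructor
  · have h1 : IntegrableOn g ((fun x : ℝ => (μ:ℝ)/hh^α * x ^ α) '' Set.Ioi t) := by
      rwa [himg]
    have h2 := (integrableOn_image_iff_integrableOn_abs_deriv_smul
      measurableSet_Ioi hderiv hinj g).mp h1
    exact h2.congr_fun hEq measurableSet_Ioi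
  · have h1 := integral_image_eq_integral_abs_deriv_smul measurableSet_Ioi hderiv hinj g
    rw [himg] at h1
    have h2 : ∫ x in Set.Ioi t, |(μ:ℝ)/hh^α * (α * x ^ (α - 1))| • g ((μ:ℝ)/hh^α * x ^ α)
        = ∫ x in Set.Ioi t, genGammaPDF α (μ:ℝ) hh x :=
      setIntegral_congr_fun measurableSet_Ioi hEq
    rw [h2] at h1
    have h3 : ∫ u in Set.Ioi W, g u = upperGamma (μ:ℝ) W / Real.Gamma (μ:ℝ) := by
      rw [hg]
      simp only []
      rw [MeasureTheory.integral_div]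
      rfl
    rw [← h1, h3, upperGamma_nat μ hμ hWpos]
    have hΓeq : Real.Gamma ((μ:ℝ)) = (Nat.factorial (μ - 1)) := by
      have h5 : ((μ - 1 : ℕ) : ℝ) + 1 = (μ:ℝ) := by
        have h4 : (μ - 1) + 1 = μ := Nat.succ_pred_eq_of_pos hμ
        exact_mod_cast congrArg (Nat.cast : ℕ → ℝ) h4
      rw [← h5, Real.Gamma_nat_eq_factorial]
    rw [hΓeq]
    field_simp

/-- The misalignment-side term-by-term integral. -/
lemma M_term (ζ S₀ c α : ℝ) (hζ : 0 < ζ) (hS : 0 < S₀) (hc : 0 < c) (hα : 0 < α) (k : ℕ) :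
    IntegrableOn (fun y => ζ / S₀ ^ ζ * y ^ (ζ - 1) *
        (Real.exp (-(c * y ^ (-α))) * ((c * y ^ (-α)) ^ k / (Nat.factorial k))))
      (Set.Ioo 0 S₀) ∧
    ∫ y in Set.Ioo 0 S₀, ζ / S₀ ^ ζ * y ^ (ζ - 1) *
        (Real.exp (-(c * y ^ (-α))) * ((c * y ^ (-α)) ^ k / (Nat.factorial k)))
      = (ζ / (α * S₀ ^ ζ) * c ^ (ζ/α) / (Nat.factorial k)) *
          upperGamma ((α * k - ζ)/α) (c * S₀ ^ (-α)) := by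
  have hT : (0:ℝ) < c * S₀ ^ (-α) := by positivity
  have hs : ∀ y ∈ Set.Ioo (0:ℝ) S₀, (0:ℝ) < y := fun y hy => hy.1
  have hderiv := hasDerivWithinAt_CRpow (C := c) (β := -α) hs
  have hinj := injOn_CRpow (β := -α) hc (neg_ne_zero.mpr hα.ne') hs
  have himg := image_CRpowNeg_Ioo hc hα hS
  set ν : ℝ := (α * k - ζ)/α with hν
  set K : ℝ := ζ / (α * S₀ ^ ζ) * c ^ (ζ/α) / (Nat.factorial k) with hK
  set g : ℝ → ℝ := fun u => K * (u ^ (ν - 1) * Real.exp (-u)) with hg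
  have hgint : IntegrableOn g (Set.Ioi (c * S₀ ^ (-α))) :=
    (integrableOn_rpow_mul_exp_neg (ν - 1) hT).const_mul K
  -- pointwise identity
  have hEq : Set.EqOn (fun y => |c * (-α * y ^ (-α - 1))| • g (c * y ^ (-α)))
      (fun y => ζ / S₀ ^ ζ * y ^ (ζ - 1) *
        (Real.exp (-(c * y ^ (-α))) * ((c * y ^ (-α)) ^ k / (Nat.factorial k))))
      (Set.Ioo 0 S₀) := by
    intro y hy
    have hy0 : (0:ℝ) < y := hy.1
    have habs : |c * (-α * y ^ (-α - 1))| = c * (α * y ^ (-α - 1)) := by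
      rw [abs_of_neg (by
        have : (0:ℝ) < α * y ^ (-α - 1) := by positivity
        nlinarith)]
      ring
    simp only [smul_eq_mul, habs, hg]
    have em : (c * y ^ (-α)) ^ (ν - 1) = c ^ (ν - 1) * y ^ ((-α) * (ν - 1)) := by
      rw [Real.mul_rpow hc.le (Real.rpow_nonneg hy0.le _), ← Real.rpow_mul hy0.le]
    have epow : (c * y ^ (-α)) ^ k = c ^ (k:ℝ) * y ^ ((-α) * (k:ℝ)) := by
      rw [mul_pow, ← Real.rpow_natCast c k, ← Real.rpow_natCast (y ^ (-α)) k,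
        ← Real.rpow_mul hy0.le]
    have ec : c * (c ^ (ζ/α) * c ^ (ν - 1)) = c ^ ((k:ℝ)) := by
      nth_rewrite 1 [← Real.rpow_one c]
      rw [← Real.rpow_add hc, ← Real.rpow_add hc]
      congr 1
      rw [hν]
      field_simp
      ring
    have ey : y ^ (-α - 1) * y ^ ((-α) * (ν - 1)) = y ^ (ζ - 1) * y ^ ((-α) * (k:ℝ)) := by
      rw [← Real.rpow_add hy0, ← Real.rpow_add hy0]
      congr 1
      rw [hν]
      field_simp
      ring
    rw [em]
    calc c * (α * y ^ (-α - 1)) * (K * ((c ^ (ν - 1) * y ^ ((-α) * (ν - 1))) *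
          Real.exp (-(c * y ^ (-α)))))
        = (α * K) * (c * (c ^ (ν - 1))) * (y ^ (-α - 1) * y ^ ((-α) * (ν - 1))) *
          Real.exp (-(c * y ^ (-α))) := by ring
      _ = ζ / S₀ ^ ζ * y ^ (ζ - 1) *
          (Real.exp (-(c * y ^ (-α))) * ((c ^ (k:ℝ) * y ^ ((-α) * (k:ℝ))) / (Nat.factorial k))) := by
          rw [ey]
          have hαK : α * K * (c * c ^ (ν - 1)) * y ^ (ζ - 1) * y ^ ((-α) * (k:ℝ))
              = ζ / S₀ ^ ζ * y ^ (ζ - 1) * (c ^ ((k:ℝ)) * y ^ ((-α) * (k:ℝ)) / (Nat.factorial k)) := by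
            rw [← ec, hK]
            have h1 : (0:ℝ) < S₀ ^ ζ := by positivity
            have h2 : (0:ℝ) < (Nat.factorial k : ℝ) := by positivity
            field_simp
          calc α * K * (c * c ^ (ν - 1)) * (y ^ (ζ - 1) * y ^ ((-α) * (k:ℝ))) *
              Real.exp (-(c * y ^ (-α)))
              = (α * K * (c * c ^ (ν - 1)) * y ^ (ζ - 1) * y ^ ((-α) * (k:ℝ))) *
                Real.exp (-(c * y ^ (-α))) := by ring
            _ = (ζ / S₀ ^ ζ * y ^ (ζ - 1) * (c ^ ((k:ℝ)) * y ^ ((-α) * (k:ℝ)) / (Nat.factorial k))) *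
                Real.exp (-(c * y ^ (-α))) := by rw [hαK]
            _ = _ := by ring
      _ = ζ / S₀ ^ ζ * y ^ (ζ - 1) *
          (Real.exp (-(c * y ^ (-α))) * ((c * y ^ (-α)) ^ k / (Nat.factorial k))) := by
          rw [epow]
    -- note: `em` used implicitly below
  have hgoalint : IntegrableOn (fun y => |c * (-α * y ^ (-α - 1))| • g (c * y ^ (-α)))
      (Set.Ioo 0 S₀) := by
    have h1 : IntegrableOn g ((fun y : ℝ => c * y ^ (-α)) '' Set.Ioo 0 S₀) := by rwa [himg]
    exact (integrableOn_image_iff_integrableOn_abs_deriv_smul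
      measurableSet_Ioo hderiv hinj g).mp h1
  constructor
  · exact hgoalint.congr_fun hEq measurableSet_Ioo
  · have h1 := integral_image_eq_integral_abs_deriv_smul measurableSet_Ioo hderiv hinj g
    rw [himg] at h1
    rw [← setIntegral_congr_fun measurableSet_Ioo hEq, ← h1, hg]
    simp only []
    rw [MeasureTheory.integral_const_mul]
    rfl
end helpers

/-- CCDF of the product of an independent generalized-Gamma fading coefficient (integer
shape `μ`) and a beam-misalignment coefficient with density `(ζ/S₀^ζ) x^(ζ-1)` on `[0,S₀]`. -/
theorem ccdf_fading_times_misalignment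
    {Ω : Type*} [MeasureSpace Ω] [IsProbabilityMeasure (ℙ : Measure Ω)]
    (F M : Ω → ℝ) (hF : Measurable F) (hM : Measurable M)
    (hind : IndepFun F M)
    (α hh ζ S₀ : ℝ) (μ : ℕ) (hμ : 1 ≤ μ)
    (hα : 0 < α) (hhh : 0 < hh) (hζ : 0 < ζ) (hS : 0 < S₀)
    (hζαμ : ζ < α * μ)
    (hlawF : (ℙ : Measure Ω).map F =
      volume.withDensity (fun x =>
        ENNReal.ofReal (if 0 < x then genGammaPDF α (μ : ℝ) hh x else 0)))
    (hlawM : (ℙ : Measure Ω).map M =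
      volume.withDensity (fun x =>
        ENNReal.ofReal (Set.indicator (Set.Icc (0 : ℝ) S₀)
          (fun y => ζ / S₀ ^ ζ * y ^ (ζ - 1)) x)))
    (z : ℝ) (hz : 0 < z) :
    ℙ {ω | z < F ω * M ω} =
      ENNReal.ofReal (∑ k ∈ Finset.range μ,
        ζ / (α * S₀ ^ ζ) * ((μ : ℝ) ^ (ζ / α) / (Nat.factorial k)) * (z ^ ζ / hh ^ ζ) *
          upperGamma ((α * k - ζ) / α) ((μ : ℝ) * z ^ α / (S₀ ^ α * hh ^ α))) := by
  have hμ0 : (0:ℝ) < (μ:ℝ) := by exact_mod_cast hμ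
  haveI hPF : IsProbabilityMeasure ((ℙ : Measure Ω).map F) :=
    Measure.isProbabilityMeasure_map hF.aemeasurable
  haveI hPM : IsProbabilityMeasure ((ℙ : Measure Ω).map M) :=
    Measure.isProbabilityMeasure_map hM.aemeasurable
  have hset : MeasurableSet {p : ℝ × ℝ | z < p.1 * p.2} :=
    measurableSet_lt measurable_const (measurable_fst.mul measurable_snd)
  have hmap : ℙ {ω | z < F ω * M ω}
      = (((ℙ : Measure Ω).map F).prod ((ℙ : Measure Ω).map M)) {p : ℝ × ℝ | z < p.1 * p.2} := by
    rw [← (ProbabilityTheory.indepFun_iff_map_prod_eq_prod_map_map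
        hF.aemeasurable hM.aemeasurable).mp hind,
      Measure.map_apply (hF.prodMk hM) hset]
    rfl
  rw [hmap, Measure.prod_apply_symm hset]
  have hsec : Measurable fun y : ℝ =>
      ((ℙ : Measure Ω).map F) ((fun x => (x, y)) ⁻¹' {p : ℝ × ℝ | z < p.1 * p.2}) :=
    measurable_measure_prodMk_right (μ := (ℙ : Measure Ω).map F) hset
  have hdens : Measurable fun x : ℝ => ENNReal.ofReal (Set.indicator (Set.Icc (0 : ℝ) S₀)
      (fun y => ζ / S₀ ^ ζ * y ^ (ζ - 1)) x) :=
    ENNReal.measurable_ofReal.comp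
      ((( measurable_rpow_const' (ζ - 1)).const_mul _).indicator measurableSet_Icc)
  rw [hlawM, lintegral_withDensity_eq_lintegral_mul _ hdens hsec]
  set c : ℝ := (μ:ℝ)/hh^α * z^α with hc
  have hcpos : 0 < c := by positivity
  have hbody : ∀ y : ℝ,
      ((fun x : ℝ => ENNReal.ofReal (Set.indicator (Set.Icc (0 : ℝ) S₀)
        (fun y => ζ / S₀ ^ ζ * y ^ (ζ - 1)) x)) * fun y : ℝ =>
        ((ℙ : Measure Ω).map F) ((fun x => (x, y)) ⁻¹' {p : ℝ × ℝ | z < p.1 * p.2})) y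
      = Set.indicator (Set.Ioc 0 S₀) (fun y => ENNReal.ofReal
          (∑ k ∈ Finset.range μ, ζ / S₀ ^ ζ * y ^ (ζ - 1) *
            (Real.exp (-(c * y ^ (-α))) * ((c * y ^ (-α)) ^ k / (Nat.factorial k))))) y := by
    intro y
    simp only [Pi.mul_apply]
    by_cases hy : y ∈ Set.Ioc 0 S₀
    · rw [Set.indicator_of_mem hy]
      have hy0 : 0 < y := hy.1
      have hpre : (fun x : ℝ => (x, y)) ⁻¹' {p : ℝ × ℝ | z < p.1 * p.2} = Set.Ioi (z/y) := by
        ext x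
        simp only [Set.mem_preimage, Set.mem_setOf_eq, Set.mem_Ioi]
        exact (div_lt_iff₀ hy0).symm
      rw [hpre, hlawF, withDensity_apply _ measurableSet_Ioi]
      have hzy : 0 < z/y := div_pos hz hy0
      have hdrop : ∫⁻ x in Set.Ioi (z/y),
          ENNReal.ofReal (if 0 < x then genGammaPDF α (μ:ℝ) hh x else 0)
          = ∫⁻ x in Set.Ioi (z/y), ENNReal.ofReal (genGammaPDF α (μ:ℝ) hh x) :=
        setLIntegral_congr_fun measurableSet_Ioi
          (fun x hx => by rw [if_pos (hzy.trans hx)])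
      rw [hdrop]
      have hFt := F_tail α hh μ hμ hα hhh hzy
      rw [← MeasureTheory.ofReal_integral_eq_lintegral_ofReal hFt.1
        (ae_restrict_of_forall_mem measurableSet_Ioi
          (fun x hx => gpdf_nonneg α hh μ hμ hα hhh (hzy.trans hx))), hFt.2]
      have hWc : (μ:ℝ)/hh^α * (z/y)^α = c * y^(-α) := by
        rw [Real.div_rpow hz.le hy0.le, Real.rpow_neg hy0.le, hc]
        ring
      rw [hWc, Set.indicator_of_mem (Set.mem_Icc.mpr ⟨hy.1.le, hy.2⟩)]
      rw [← ENNReal.ofReal_mul (by positivity)]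
      congr 1
      rw [Finset.mul_sum, Finset.mul_sum]
    · rw [Set.indicator_of_notMem hy]
      by_cases hy0 : y = 0
      · subst hy0
        have hpre : (fun x : ℝ => (x, (0:ℝ))) ⁻¹' {p : ℝ × ℝ | z < p.1 * p.2} = ∅ := by
          ext x
          simp only [Set.mem_preimage, Set.mem_setOf_eq, Set.mem_empty_iff_false, iff_false,
            mul_zero, not_lt]
          exact hz.le
        rw [hpre]
        simp
      · have hnic : y ∉ Set.Icc (0:ℝ) S₀ := by
          intro hmem
          exact hy ⟨lt_of_le_of_ne hmem.1 (Ne.symm hy0), hmem.2⟩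
        rw [Set.indicator_of_notMem hnic]
        simp
  rw [lintegral_congr hbody, lintegral_indicator measurableSet_Ioc _]
  rw [← setLIntegral_congr (MeasureTheory.Ioo_ae_eq_Ioc (μ := volume) (a := (0:ℝ)) (b := S₀))]
  have hterm := fun k : ℕ => M_term ζ S₀ c α hζ hS hcpos hα k
  have hHint : IntegrableOn (fun y => ∑ k ∈ Finset.range μ, ζ / S₀ ^ ζ * y ^ (ζ - 1) *
      (Real.exp (-(c * y ^ (-α))) * ((c * y ^ (-α)) ^ k / (Nat.factorial k))))
      (Set.Ioo 0 S₀) :=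
    integrable_finset_sum _ (fun k _ => (hterm k).1)
  have hHnn : 0 ≤ᵐ[volume.restrict (Set.Ioo 0 S₀)]
      (fun y => ∑ k ∈ Finset.range μ, ζ / S₀ ^ ζ * y ^ (ζ - 1) *
        (Real.exp (-(c * y ^ (-α))) * ((c * y ^ (-α)) ^ k / (Nat.factorial k)))) := by
    refine ae_restrict_of_forall_mem measurableSet_Ioo (fun y hy => ?_)
    refine Finset.sum_nonneg (fun k _ => ?_)
    have hy0 : (0:ℝ) < y := hy.1
    have h1 : (0:ℝ) ≤ y ^ (ζ - 1) := Real.rpow_nonneg hy0.le _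
    have h2 : (0:ℝ) ≤ c * y ^ (-α) := mul_nonneg hcpos.le (Real.rpow_nonneg hy0.le _)
    have h3 : (0:ℝ) ≤ (c * y ^ (-α)) ^ k := pow_nonneg h2 k
    have h4 : (0:ℝ) ≤ ζ / S₀ ^ ζ := by positivity
    exact mul_nonneg (mul_nonneg h4 h1) (mul_nonneg (Real.exp_pos _).le
      (div_nonneg h3 (by positivity)))
  rw [← MeasureTheory.ofReal_integral_eq_lintegral_ofReal hHint hHnn]
  rw [integral_finset_sum _ (fun k _ => (hterm k).1)]
  congr 1
  refine Finset.sum_congr rfl (fun k _ => ?_)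
  rw [(hterm k).2]
  have hT : c * S₀ ^ (-α) = (μ:ℝ) * z ^ α / (S₀ ^ α * hh ^ α) := by
    rw [hc, Real.rpow_neg hS.le]
    field_simp
  have hcζ : c ^ (ζ/α) = (μ:ℝ) ^ (ζ/α) * (z ^ ζ / hh ^ ζ) := by
    rw [hc, Real.mul_rpow (div_nonneg hμ0.le (Real.rpow_nonneg hhh.le _))
        (Real.rpow_nonneg hz.le _),
      Real.div_rpow hμ0.le (Real.rpow_nonneg hhh.le _), ← Real.rpow_mul hhh.le,
      ← Real.rpow_mul hz.le]
    rw [show α * (ζ/α) = ζ by field_simp]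
    ring
  rw [hT, hcζ]
  ring
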